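/- arXiv:2109.01300 — 3 statements merged into one kernel-verified Lean document; each statement's English description precedes it below -/
import Mathlib

section
/- Let C ≥ 1, n ≥ 1, fix a label y : Fin C and an input x ∈ ℝⁿ (EuclideanSpace ℝ (Fin n)). Define the linear-model cross-entropy loss L(W) = −log(softmax(i ↦ ⟨W_i, x⟩)_y) as a function of the weight vectors W : Fin C → ℝⁿ. Then L is twice differentiable, and at every W, for every perturbation δ : Fin C → ℝⁿ, writing ε_i = ⟨δ_i, x⟩ and p = softmax(i ↦ ⟨W_i, x⟩), the quadratic form of the second derivative satisfies (1/2)·D²L(W)[δ, δ] = (1/4) · ∑_{i,j} p_i p_j (ε_i − ε_j)². -/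
open scoped RealInnerProductSpace

/-- Softmax of a logit vector `s : Fin C → ℝ`. -/
noncomputable def softmax {C : ℕ} (s : Fin C → ℝ) (i : Fin C) : ℝ :=
  Real.exp (s i) / ∑ k, Real.exp (s k)

/-- The linear logit functional `W ↦ ⟪x, W k⟫` as a continuous linear map. -/
noncomputable def logitCLM (C n : ℕ) (x : EuclideanSpace ℝ (Fin n)) (k : Fin C) :
    (Fin C → EuclideanSpace ℝ (Fin n)) →L[ℝ] ℝ :=
  (innerSL ℝ x).comp (ContinuousLinearMap.proj k :
    (Fin C → EuclideanSpace ℝ (Fin n)) →L[ℝ] EuclideanSpace ℝ (Fin n))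

lemma logitCLM_apply (C n : ℕ) (x : EuclideanSpace ℝ (Fin n)) (k : Fin C)
    (W : Fin C → EuclideanSpace ℝ (Fin n)) : logitCLM C n x k W = ⟪x, W k⟫ := rfl

/-- Cross-entropy loss rewritten as `log ∑ exp − logit`. -/
noncomputable def ceLoss (C n : ℕ) (x : EuclideanSpace ℝ (Fin n)) (y : Fin C)
    (W : Fin C → EuclideanSpace ℝ (Fin n)) : ℝ :=
  Real.log (∑ k, Real.exp ⟪x, W k⟫) - ⟪x, W y⟫

lemma double_sum_sq {C : ℕ} (a b : Fin C → ℝ) :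
    ∑ i, ∑ j, a i * a j * (b i - b j) ^ 2
      = 2 * ((∑ i, a i * b i ^ 2) * (∑ i, a i) - (∑ i, a i * b i) ^ 2) := by
  calc ∑ i, ∑ j, a i * a j * (b i - b j) ^ 2
      = ∑ i, ∑ j, ((a i * b i ^ 2) * a j - 2 * ((a i * b i) * (a j * b j))
          + a i * (a j * b j ^ 2)) := by
        refine Finset.sum_congr rfl fun i _ => Finset.sum_congr rfl fun j _ => ?_; ring
    _ = ∑ i, ((a i * b i ^ 2) * (∑ j, a j) - 2 * ((a i * b i) * (∑ j, a j * b j))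
          + a i * (∑ j, a j * b j ^ 2)) := by
        refine Finset.sum_congr rfl fun i _ => ?_
        rw [Finset.sum_add_distrib, Finset.sum_sub_distrib, ← Finset.mul_sum, ← Finset.mul_sum,
          ← Finset.mul_sum, ← Finset.mul_sum]
    _ = (∑ i, a i * b i ^ 2) * (∑ j, a j) - 2 * ((∑ i, a i * b i) * (∑ j, a j * b j))
          + (∑ i, a i) * (∑ j, a j * b j ^ 2) := by
        rw [Finset.sum_add_distrib, Finset.sum_sub_distrib, ← Finset.sum_mul, ← Finset.mul_sum,
          ← Finset.sum_mul, ← Finset.sum_mul]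
    _ = _ := by ring

/-- For the linear-model cross-entropy loss `L(W) = -log (softmax (i ↦ ⟪W i, x⟫) y)`,
`L` is twice differentiable and, at every `W` and every perturbation `δ`, writing
`ε i = ⟪δ i, x⟫` and `p = softmax (i ↦ ⟪W i, x⟫)`, the quadratic form of the second
derivative satisfies `(1/2) * D²L(W)[δ, δ] = (1/4) * ∑ i, ∑ j, p i * p j * (ε i - ε j)^2`. -/
theorem linearModel_crossEntropy_second_derivative (C n : ℕ) (hC : 1 ≤ C) (hn : 1 ≤ n)
    (y : Fin C) (x : EuclideanSpace ℝ (Fin n)) :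
    Differentiable ℝ (fun W : Fin C → EuclideanSpace ℝ (Fin n) =>
      -Real.log (softmax (fun i => ⟪W i, x⟫) y)) ∧
    Differentiable ℝ (fderiv ℝ (fun W : Fin C → EuclideanSpace ℝ (Fin n) =>
      -Real.log (softmax (fun i => ⟪W i, x⟫) y))) ∧
    ∀ (W δ : Fin C → EuclideanSpace ℝ (Fin n)),
      (1 / 2) *
          fderiv ℝ (fderiv ℝ (fun W : Fin C → EuclideanSpace ℝ (Fin n) =>
            -Real.log (softmax (fun i => ⟪W i, x⟫) y))) W δ δ =
        (1 / 4) * ∑ i, ∑ j,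
          softmax (fun k => ⟪W k, x⟫) i * softmax (fun k => ⟪W k, x⟫) j *
            (⟪δ i, x⟫ - ⟪δ j, x⟫) ^ 2 := by
  have hpos : ∀ W : Fin C → EuclideanSpace ℝ (Fin n), 0 < ∑ k, Real.exp ⟪x, W k⟫ :=
    fun W => Finset.sum_pos (fun k _ => Real.exp_pos _) ⟨y, Finset.mem_univ y⟩
  have hfun_eq : (fun W : Fin C → EuclideanSpace ℝ (Fin n) =>
      -Real.log (softmax (fun i => ⟪W i, x⟫) y)) = ceLoss C n x y := by
    funext W
    have hsum : (∑ k, Real.exp ⟪W k, x⟫) = ∑ k, Real.exp ⟪x, W k⟫ :=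
      Finset.sum_congr rfl fun k _ => by rw [real_inner_comm]
    simp only [softmax, ceLoss]
    rw [Real.log_div (Real.exp_ne_zero _) (by rw [hsum]; exact (hpos W).ne'), Real.log_exp,
      neg_sub, hsum, real_inner_comm]
  rw [hfun_eq]
  -- first derivative
  have hd1 : ∀ W : Fin C → EuclideanSpace ℝ (Fin n),
      HasFDerivAt (ceLoss C n x y)
        ((∑ k, Real.exp ⟪x, W k⟫)⁻¹ • (∑ k, Real.exp ⟪x, W k⟫ • logitCLM C n x k)
          - logitCLM C n x y) W := by
    intro W
    have hsum : HasFDerivAt (fun W : Fin C → EuclideanSpace ℝ (Fin n) => ∑ k, Real.exp ⟪x, W k⟫)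
        (∑ k, Real.exp ⟪x, W k⟫ • logitCLM C n x k) W :=
      HasFDerivAt.fun_sum fun k _ => (logitCLM C n x k).hasFDerivAt.exp
    exact (hsum.log (hpos W).ne').sub (logitCLM C n x y).hasFDerivAt
  have hCD : ContDiff ℝ 2 (ceLoss C n x y) := by
    have h1 : ContDiff ℝ 2 (fun W : Fin C → EuclideanSpace ℝ (Fin n) =>
        ∑ k, Real.exp ⟪x, W k⟫) :=
      ContDiff.sum fun k _ => Real.contDiff_exp.comp (logitCLM C n x k).contDiff
    exact (h1.log fun W => (hpos W).ne').sub (logitCLM C n x y).contDiff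
  have hdiffL : Differentiable ℝ (ceLoss C n x y) := hCD.differentiable (by norm_num)
  have hdiffF : Differentiable ℝ (fderiv ℝ (ceLoss C n x y)) :=
    (hCD.fderiv_right (m := 1) (by norm_num)).differentiable (by norm_num)
  refine ⟨hdiffL, hdiffF, fun W δ => ?_⟩
  -- the first derivative evaluated at δ, as a function of W
  have hG : (fun W' => fderiv ℝ (ceLoss C n x y) W' δ)
      = fun W' : Fin C → EuclideanSpace ℝ (Fin n) =>
          (∑ k, Real.exp ⟪x, W' k⟫)⁻¹ * (∑ k, Real.exp ⟪x, W' k⟫ * ⟪x, δ k⟫) - ⟪x, δ y⟫ := by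
    funext W'
    rw [(hd1 W').fderiv]
    simp only [ContinuousLinearMap.sub_apply, ContinuousLinearMap.coe_smul', Pi.smul_apply,
      ContinuousLinearMap.sum_apply, ContinuousLinearMap.smul_apply, smul_eq_mul,
      logitCLM_apply]
  -- derivative of G at W
  set h : ℝ := ∑ k, Real.exp ⟪x, W k⟫ with hh
  set A : ℝ := ∑ k, Real.exp ⟪x, W k⟫ * ⟪x, δ k⟫ with hA
  set B : ℝ := ∑ k, Real.exp ⟪x, W k⟫ * ⟪x, δ k⟫ ^ 2 with hB
  have hsumW : HasFDerivAt (fun W' : Fin C → EuclideanSpace ℝ (Fin n) => ∑ k, Real.exp ⟪x, W' k⟫)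
      (∑ k, Real.exp ⟪x, W k⟫ • logitCLM C n x k) W :=
    HasFDerivAt.fun_sum fun k _ => (logitCLM C n x k).hasFDerivAt.exp
  have hinv : HasFDerivAt (fun W' : Fin C → EuclideanSpace ℝ (Fin n) =>
      (∑ k, Real.exp ⟪x, W' k⟫)⁻¹)
      ((-(h ^ 2)⁻¹) • ∑ k, Real.exp ⟪x, W k⟫ • logitCLM C n x k) W :=
    (hasDerivAt_inv (hpos W).ne').comp_hasFDerivAt W hsumW
  have hnum : HasFDerivAt (fun W' : Fin C → EuclideanSpace ℝ (Fin n) =>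
      ∑ k, Real.exp ⟪x, W' k⟫ * ⟪x, δ k⟫)
      (∑ k, ⟪x, δ k⟫ • (Real.exp ⟪x, W k⟫ • logitCLM C n x k)) W :=
    HasFDerivAt.fun_sum fun k _ => ((logitCLM C n x k).hasFDerivAt.exp).mul_const _
  have hGd : HasFDerivAt (fun W' : Fin C → EuclideanSpace ℝ (Fin n) =>
      (∑ k, Real.exp ⟪x, W' k⟫)⁻¹ * (∑ k, Real.exp ⟪x, W' k⟫ * ⟪x, δ k⟫) - ⟪x, δ y⟫)
      (h⁻¹ • (∑ k, ⟪x, δ k⟫ • (Real.exp ⟪x, W k⟫ • logitCLM C n x k))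
        + A • ((-(h ^ 2)⁻¹) • ∑ k, Real.exp ⟪x, W k⟫ • logitCLM C n x k)) W :=
    (hinv.mul hnum).sub_const _
  -- second derivative applied at (δ, δ)
  have key : fderiv ℝ (fderiv ℝ (ceLoss C n x y)) W δ δ = B / h - (A / h) ^ 2 := by
    have h1 : fderiv ℝ (fun W' => fderiv ℝ (ceLoss C n x y) W' δ) W
        = (fderiv ℝ (fderiv ℝ (ceLoss C n x y)) W).flip δ := by
      rw [fderiv_clm_apply (hdiffF W) (differentiableAt_const δ)]
      rw [fderiv_fun_const]
      simp only [Pi.zero_apply, ContinuousLinearMap.comp_zero, zero_add]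
    have h2 : fderiv ℝ (fun W' => fderiv ℝ (ceLoss C n x y) W' δ) W δ
        = fderiv ℝ (fderiv ℝ (ceLoss C n x y)) W δ δ := by
      rw [h1]; rfl
    rw [← h2, hG, hGd.fderiv]
    have hδ : ∀ k : Fin C, logitCLM C n x k δ = ⟪x, δ k⟫ := fun k => rfl
    simp only [ContinuousLinearMap.add_apply, ContinuousLinearMap.smul_apply,
      ContinuousLinearMap.sum_apply, hδ, smul_eq_mul]
    have e1 : (∑ k, ⟪x, δ k⟫ * (Real.exp ⟪x, W k⟫ * ⟪x, δ k⟫)) = B := by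
      rw [hB]; refine Finset.sum_congr rfl fun k _ => ?_; ring
    have e2 : (∑ k, Real.exp ⟪x, W k⟫ * ⟪x, δ k⟫) = A := rfl
    rw [e1, e2]
    have hhne : h ≠ 0 := (hpos W).ne'
    ring
  rw [key]
  -- now the algebraic identity
  have hinner : ∀ v : EuclideanSpace ℝ (Fin n), (⟪v, x⟫ : ℝ) = ⟪x, v⟫ := fun v =>
    real_inner_comm x v
  have hsoft : ∀ i : Fin C, softmax (fun k => ⟪W k, x⟫) i = Real.exp ⟪x, W i⟫ / h := by
    intro i
    simp only [softmax, hinner, hh]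
  have hRHS : (∑ i, ∑ j, softmax (fun k => ⟪W k, x⟫) i * softmax (fun k => ⟪W k, x⟫) j *
      (⟪δ i, x⟫ - ⟪δ j, x⟫) ^ 2)
      = 2 * ((∑ i, (Real.exp ⟪x, W i⟫ / h) * ⟪x, δ i⟫ ^ 2) * (∑ i, Real.exp ⟪x, W i⟫ / h)
        - (∑ i, (Real.exp ⟪x, W i⟫ / h) * ⟪x, δ i⟫) ^ 2) := by
    rw [← double_sum_sq (fun i => Real.exp ⟪x, W i⟫ / h) (fun i => ⟪x, δ i⟫)]
    refine Finset.sum_congr rfl fun i _ => Finset.sum_congr rfl fun j _ => ?_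
    rw [hsoft i, hsoft j, hinner (δ i), hinner (δ j)]
  rw [hRHS]
  have hhne : h ≠ 0 := (hpos W).ne'
  have hsum1 : (∑ i, Real.exp ⟪x, W i⟫ / h) = 1 := by
    rw [← Finset.sum_div, ← hh, div_self hhne]
  have hsB : (∑ i, (Real.exp ⟪x, W i⟫ / h) * ⟪x, δ i⟫ ^ 2) = B / h := by
    rw [hB, Finset.sum_div]; refine Finset.sum_congr rfl fun i _ => ?_; ring
  have hsA : (∑ i, (Real.exp ⟪x, W i⟫ / h) * ⟪x, δ i⟫) = A / h := by
    rw [hA, Finset.sum_div]; refine Finset.sum_congr rfl fun i _ => ?_; ring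
  rw [hsum1, hsB, hsA]
  ring
end

section
/- Let C ≥ 1, let s, ε : Fin C → ℝ, let p = softmax(s) and p* = softmax(s + ε). Then KL(p‖p*) ≤ (1/2) · ∑_{i=1}^{C} ε_i². (Non-asymptotic form, with constant α = 1/2, of the paper's proposition that the Kullback-Leibler divergence is bounded by the anchoring loss ∑_i ε_i².) -/
open Real Finset

/-- If `f` has second derivative bounded by `M`, then `f 1 ≤ f 0 + f' 0 + M/2`. -/
lemma taylor_bound_aux (f f' f'' : ℝ → ℝ) (M : ℝ)
    (h1 : ∀ t, HasDerivAt f (f' t) t) (h2 : ∀ t, HasDerivAt f' (f'' t) t)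
    (hM : ∀ t, f'' t ≤ M) : f 1 ≤ f 0 + f' 0 + M / 2 := by
  set h : ℝ → ℝ := fun t => f' 0 + M * t - f' t with hh
  have hhd : ∀ t, HasDerivAt h (M - f'' t) t := by
    intro t
    have : HasDerivAt (fun t : ℝ => f' 0 + M * t) M t := by
      simpa using ((hasDerivAt_id t).const_mul M).const_add (f' 0)
    simpa using this.fun_sub (h2 t)
  have hmono : Monotone h := by
    apply monotone_of_deriv_nonneg
    · exact fun t => (hhd t).differentiableAt
    · intro t
      rw [(hhd t).deriv]
      linarith [hM t]
  have hnonneg : ∀ t ∈ Set.Ici (0:ℝ), 0 ≤ h t := by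
    intro t ht
    have := hmono (show (0:ℝ) ≤ t from ht)
    simpa [hh] using this
  set g : ℝ → ℝ := fun t => f 0 + f' 0 * t + M * t ^ 2 / 2 - f t with hg
  have hgd : ∀ t, HasDerivAt g (h t) t := by
    intro t
    have hq : HasDerivAt (fun t : ℝ => f 0 + f' 0 * t + M * t ^ 2 / 2)
        (f' 0 + M * t) t := by
      have h1' : HasDerivAt (fun t : ℝ => f 0 + f' 0 * t) (f' 0) t := by
        simpa using ((hasDerivAt_id t).const_mul (f' 0)).const_add (f 0)
      have h2' : HasDerivAt (fun t : ℝ => M * t ^ 2 / 2) (M * t) t := by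
        have := ((hasDerivAt_pow 2 t).const_mul M).div_const 2
        convert! this using 1
        ring
      simpa using h1'.fun_add h2'
    simpa [hh] using hq.fun_sub (h1 t)
  have hgmono : MonotoneOn g (Set.Ici (0:ℝ)) := by
    apply monotoneOn_of_deriv_nonneg (convex_Ici 0)
    · exact (fun t _ => ((hgd t).differentiableAt).continuousAt.continuousWithinAt)
    · intro t ht
      exact ((hgd t).differentiableAt).differentiableWithinAt
    · intro t ht
      rw [(hgd t).deriv]
      exact hnonneg t (le_of_lt (by simpa using ht))
  have h01 : g 0 ≤ g 1 := hgmono Set.self_mem_Ici (by norm_num) (by norm_num)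
  simp only [hg] at h01
  nlinarith [h01]

/-- For `p = softmax s` and `p* = softmax (s + ε)`, the Kullback-Leibler divergence is
bounded by half the anchoring loss: `KL(p‖p*) ≤ (1/2) * ∑ i, ε i ^ 2`. -/
theorem kl_softmax_le_half_anchoring_loss (C : ℕ) (hC : 1 ≤ C) (s ε : Fin C → ℝ) :
    ∑ i, softmax s i * Real.log (softmax s i / softmax (s + ε) i) ≤
      (1 / 2) * ∑ i, ε i ^ 2 := by
  haveI : NeZero C := ⟨by omega⟩
  have hne : (Finset.univ : Finset (Fin C)).Nonempty := Finset.univ_nonempty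
  set M : ℝ := ∑ i, ε i ^ 2 with hM
  set Z : ℝ → ℝ := fun t => ∑ k, Real.exp (s k + t * ε k) with hZ
  set A : ℝ → ℝ := fun t => ∑ k, ε k * Real.exp (s k + t * ε k) with hA
  set B : ℝ → ℝ := fun t => ∑ k, ε k ^ 2 * Real.exp (s k + t * ε k) with hB
  have hZpos : ∀ t, 0 < Z t := fun t =>
    Finset.sum_pos (fun k _ => Real.exp_pos _) hne
  have hexp : ∀ (k : Fin C) (t : ℝ),
      HasDerivAt (fun t => Real.exp (s k + t * ε k)) (ε k * Real.exp (s k + t * ε k)) t := by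
    intro k t
    have : HasDerivAt (fun t : ℝ => s k + t * ε k) (ε k) t := by
      simpa using (hasDerivAt_mul_const (ε k)).const_add (s k)
    simpa [mul_comm] using this.exp
  have hZd : ∀ t, HasDerivAt Z (A t) t := by
    intro t
    exact HasDerivAt.fun_sum (fun k _ => hexp k t)
  have hAd : ∀ t, HasDerivAt A (B t) t := by
    intro t
    apply HasDerivAt.fun_sum
    intro k _
    have := (hexp k t).const_mul (ε k)
    convert! this using 1
    ring
  set F : ℝ → ℝ := fun t => Real.log (Z t) with hF
  set G : ℝ → ℝ := fun t => A t / Z t with hG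
  have hFd : ∀ t, HasDerivAt F (G t) t := fun t => (hZd t).log (hZpos t).ne'
  have hGd : ∀ t, HasDerivAt G ((B t * Z t - A t * A t) / (Z t) ^ 2) t :=
    fun t => (hAd t).div (hZd t) (hZpos t).ne'
  have hbound : ∀ t, (B t * Z t - A t * A t) / (Z t) ^ 2 ≤ M := by
    intro t
    have hBle : B t ≤ M * Z t := by
      rw [hB, hM, hZ, Finset.sum_mul]
      apply Finset.sum_le_sum
      intro k _
      have hk : Real.exp (s k + t * ε k) ≤ Z t :=
        Finset.single_le_sum (f := fun j => Real.exp (s j + t * ε j))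
          (fun j _ => (Real.exp_pos _).le) (Finset.mem_univ k)
      nlinarith [sq_nonneg (ε k), Real.exp_pos (s k + t * ε k)]
    have hZ2 : (0:ℝ) < (Z t) ^ 2 := by positivity
    rw [div_le_iff₀ hZ2]
    nlinarith [sq_nonneg (A t), hZpos t]
  have key : F 1 ≤ F 0 + G 0 + M / 2 :=
    taylor_bound_aux F G (fun t => (B t * Z t - A t * A t) / (Z t) ^ 2) M hFd hGd hbound
  -- Now rewrite KL as F 1 - F 0 - G 0
  have hp1 : ∑ i, softmax s i = 1 := by
    unfold softmax
    rw [← Finset.sum_div, div_self]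
    exact (Finset.sum_pos (fun k _ => Real.exp_pos _) hne).ne'
  have hZ0 : Z 0 = ∑ k, Real.exp (s k) := by simp [hZ]
  have hZ1 : Z 1 = ∑ k, Real.exp (s k + ε k) := by simp [hZ]
  have hlog : ∀ i, Real.log (softmax s i / softmax (s + ε) i)
      = -(ε i) + F 1 - F 0 := by
    intro i
    unfold softmax
    simp only [Pi.add_apply]
    rw [← hZ0, ← hZ1]
    rw [Real.log_div (by positivity) (by positivity),
        Real.log_div (Real.exp_ne_zero _) (hZpos 0).ne',
        Real.log_div (Real.exp_ne_zero _) (hZpos 1).ne',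
        Real.log_exp, Real.log_exp]
    simp only [hF]
    ring
  have hG0 : G 0 = ∑ i, softmax s i * ε i := by
    have h1 : ∀ i, softmax s i * ε i = ε i * Real.exp (s i + 0 * ε i) / Z 0 := by
      intro i
      unfold softmax
      rw [← hZ0]
      simp
      ring
    simp only [h1]
    rw [hG, hA, ← Finset.sum_div]
  have hsum : ∑ i, softmax s i * Real.log (softmax s i / softmax (s + ε) i)
      = -(∑ i, softmax s i * ε i) + (F 1 - F 0) := by
    simp only [hlog]
    have h2 : ∀ i, softmax s i * (-(ε i) + F 1 - F 0)
        = -(softmax s i * ε i) + softmax s i * (F 1 - F 0) := by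
      intro i; ring
    simp only [h2]
    rw [Finset.sum_add_distrib, ← Finset.sum_mul, hp1, Finset.sum_neg_distrib]
    ring
  rw [hsum]
  rw [hG0] at key
  linarith
end

section
/- Let C ≥ 1 and s : Fin C → ℝ, and let p = softmax(s). Define f : (Fin C → ℝ) → ℝ by f(ε) = KL(softmax(s) ‖ softmax(s + ε)). Then f is twice differentiable at 0, with f(0) = 0, first derivative Df(0) = 0, and for every ε the second derivative quadratic form satisfies D²f(0)[ε, ε] = ∑_i p_i (ε_i − ∑_j p_j ε_j)². Consequently the second-order Taylor expansion of f at 0 is (1/2) ∑_i p_i (ε_i − ε̄)² where ε̄ = ∑_j p_j ε_j. -/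
noncomputable def klPerturb {C : ℕ} (s : Fin C → ℝ) (ε : Fin C → ℝ) : ℝ :=
  ∑ i, softmax s i * Real.log (softmax s i / softmax (s + ε) i)

namespace KLAux

variable {C : ℕ} (s : Fin C → ℝ)

noncomputable def Z (ε : Fin C → ℝ) : ℝ := ∑ k, Real.exp (s k + ε k)

noncomputable def DZ (ε : Fin C → ℝ) : (Fin C → ℝ) →L[ℝ] ℝ :=
  ∑ k, Real.exp (s k + ε k) • ContinuousLinearMap.proj k

lemma Z_pos (hC : 1 ≤ C) (ε : Fin C → ℝ) : 0 < Z s ε := by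
  haveI : Nonempty (Fin C) := ⟨⟨0, hC⟩⟩
  exact Finset.sum_pos (fun k _ => Real.exp_pos _) Finset.univ_nonempty

lemma Z_zero : Z s 0 = ∑ k, Real.exp (s k) := by simp [Z]

lemma DZ_apply (ε η : Fin C → ℝ) : DZ s ε η = ∑ k, Real.exp (s k + ε k) * η k := by
  simp [DZ, ContinuousLinearMap.sum_apply]

lemma hasFDerivAt_Z (ε : Fin C → ℝ) : HasFDerivAt (Z s) (DZ s ε) ε := by
  apply HasFDerivAt.fun_sum
  intro k _
  have h1 : HasFDerivAt (fun ε : Fin C → ℝ => s k + ε k)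
      (ContinuousLinearMap.proj k : (Fin C → ℝ) →L[ℝ] ℝ) ε := by
    simpa using (hasFDerivAt_const (s k) ε).fun_add
      ((ContinuousLinearMap.proj k : (Fin C → ℝ) →L[ℝ] ℝ).hasFDerivAt)
  exact (Real.hasDerivAt_exp (s k + ε k)).comp_hasFDerivAt ε h1

lemma sum_softmax (hC : 1 ≤ C) : ∑ i, softmax s i = 1 := by
  have h : (0:ℝ) < ∑ k, Real.exp (s k) := by simpa [Z_zero] using Z_pos s hC 0
  simp only [softmax]
  rw [← Finset.sum_div, div_self h.ne']

lemma klPerturb_eq (hC : 1 ≤ C) :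
    klPerturb s = fun ε => Real.log (Z s ε) - Real.log (Z s 0) - ∑ i, softmax s i * ε i := by
  funext ε
  have hZε := Z_pos s hC ε
  have hZ0 := Z_pos s hC 0
  have hT : (0:ℝ) < ∑ k, Real.exp (s k) := by simpa [Z_zero] using hZ0
  have key : ∀ i, Real.log (softmax s i / softmax (s + ε) i)
      = Real.log (Z s ε) - Real.log (Z s 0) - ε i := by
    intro i
    have hp : (0:ℝ) < softmax s i := by
      have : (0:ℝ) < ∑ k, Real.exp (s k) := hT
      exact div_pos (Real.exp_pos _) this
    have hq : (0:ℝ) < softmax (s + ε) i := by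
      have h0 : (0:ℝ) < ∑ k, Real.exp ((s + ε) k) := by
        simpa [Pi.add_apply, Z] using hZε
      exact div_pos (Real.exp_pos _) h0
    have e1 : Real.log (softmax s i) = s i - Real.log (Z s 0) := by
      rw [softmax, Real.log_div (Real.exp_ne_zero _) hT.ne', Real.log_exp, Z_zero]
    have e2 : Real.log (softmax (s + ε) i) = (s i + ε i) - Real.log (Z s ε) := by
      have hd : (∑ k, Real.exp ((s + ε) k)) = Z s ε := by simp [Z, Pi.add_apply]
      rw [softmax, Real.log_div (Real.exp_ne_zero _) (by rw [hd]; exact hZε.ne'),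
        Real.log_exp, hd, Pi.add_apply]
    rw [Real.log_div hp.ne' hq.ne', e1, e2]
    ring
  simp only [klPerturb]
  rw [Finset.sum_congr rfl (fun i _ => by rw [key i])]
  have : ∀ i, softmax s i * (Real.log (Z s ε) - Real.log (Z s 0) - ε i)
      = softmax s i * (Real.log (Z s ε) - Real.log (Z s 0)) - softmax s i * ε i := by
    intro i; ring
  rw [Finset.sum_congr rfl (fun i _ => this i), Finset.sum_sub_distrib,
    ← Finset.sum_mul, sum_softmax s hC, one_mul]

noncomputable def G (ε : Fin C → ℝ) : (Fin C → ℝ) →L[ℝ] ℝ := (Z s ε)⁻¹ • DZ s ε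

noncomputable def Lc : (Fin C → ℝ) →L[ℝ] ℝ :=
  ∑ i, softmax s i • ContinuousLinearMap.proj i

lemma Lc_apply (η : Fin C → ℝ) : Lc s η = ∑ i, softmax s i * η i := by
  simp [Lc, ContinuousLinearMap.sum_apply]

lemma hasFDerivAt_kl (hC : 1 ≤ C) (ε : Fin C → ℝ) :
    HasFDerivAt (klPerturb s) (G s ε - Lc s) ε := by
  rw [klPerturb_eq s hC]
  have hF : HasFDerivAt (fun ε => Real.log (Z s ε)) (G s ε) ε := by
    have := (Real.hasDerivAt_log (Z_pos s hC ε).ne').comp_hasFDerivAt ε (hasFDerivAt_Z s ε)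
    simpa [G, Function.comp_def] using this
  have h2 := (hF.sub_const (Real.log (Z s 0))).sub ((Lc s).hasFDerivAt (x := ε))
  have hfun : (fun ε : Fin C → ℝ => (Real.log (Z s ε) - Real.log (Z s 0)) - Lc s ε)
      = fun ε => Real.log (Z s ε) - Real.log (Z s 0) - ∑ i, softmax s i * ε i := by
    funext η; rw [Lc_apply]
  rw [← hfun]
  exact h2

lemma fderiv_kl (hC : 1 ≤ C) :
    fderiv ℝ (klPerturb s) = fun ε => G s ε - Lc s :=
  funext fun ε => (hasFDerivAt_kl s hC ε).fderiv

lemma G_zero_eq_Lc (hC : 1 ≤ C) : G s 0 = Lc s := by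
  ext η
  have hT : (0:ℝ) < ∑ k, Real.exp (s k) := by simpa [Z_zero] using Z_pos s hC 0
  rw [Lc_apply]
  simp only [G, ContinuousLinearMap.smul_apply, DZ_apply, Pi.zero_apply, add_zero,
    Z_zero, smul_eq_mul, Finset.mul_sum]
  refine Finset.sum_congr rfl fun i _ => ?_
  simp [softmax]
  ring

noncomputable def a' : (Fin C → ℝ) →L[ℝ] ℝ := -(((Z s 0) ^ 2)⁻¹ • DZ s 0)

noncomputable def v' : (Fin C → ℝ) →L[ℝ] ((Fin C → ℝ) →L[ℝ] ℝ) :=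
  ∑ k, ((Real.exp (s k + (0 : Fin C → ℝ) k) • (ContinuousLinearMap.proj k : (Fin C → ℝ) →L[ℝ] ℝ)).smulRight
    (ContinuousLinearMap.proj k : (Fin C → ℝ) →L[ℝ] ℝ))

noncomputable def G' : (Fin C → ℝ) →L[ℝ] ((Fin C → ℝ) →L[ℝ] ℝ) :=
  (Z s 0)⁻¹ • v' s + (a' s).smulRight (DZ s 0)

lemma hasFDerivAt_DZ : HasFDerivAt (DZ s) (v' s) 0 := by
  apply HasFDerivAt.fun_sum
  intro k _
  refine HasFDerivAt.smul_const (𝕜 := ℝ) (F := (Fin C → ℝ) →L[ℝ] ℝ) ?_ _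
  have h1 : HasFDerivAt (fun ε : Fin C → ℝ => s k + ε k)
      (ContinuousLinearMap.proj k : (Fin C → ℝ) →L[ℝ] ℝ) 0 := by
    simpa using (hasFDerivAt_const (s k) (0 : Fin C → ℝ)).fun_add
      ((ContinuousLinearMap.proj k : (Fin C → ℝ) →L[ℝ] ℝ).hasFDerivAt)
  exact (Real.hasDerivAt_exp (s k + (0 : Fin C → ℝ) k)).comp_hasFDerivAt 0 h1

lemma hasFDerivAt_G (hC : 1 ≤ C) : HasFDerivAt (G s) (G' s) 0 := by
  have hinv : HasFDerivAt (fun ε => (Z s ε)⁻¹) (a' s) 0 := by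
    have := (hasDerivAt_inv (Z_pos s hC 0).ne').comp_hasFDerivAt 0 (hasFDerivAt_Z s 0)
    simpa [a', Function.comp_def] using this
  have := hinv.smul (hasFDerivAt_DZ s)
  exact this

lemma fderiv2_kl (hC : 1 ≤ C) :
    fderiv ℝ (fderiv ℝ (klPerturb s)) 0 = G' s := by
  rw [fderiv_kl s hC]
  exact ((hasFDerivAt_G s hC).sub_const (Lc s)).fderiv

end KLAux

/-- `f(ε) = KL(softmax s ‖ softmax (s + ε))` is twice differentiable at `0`, with
`f 0 = 0`, vanishing first derivative at `0`, and second derivative quadratic form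
`D²f(0)[ε, ε] = ∑ i, p i * (ε i - ∑ j, p j * ε j)^2` where `p = softmax s`; consequently
its second-order Taylor expansion at `0` is `(1/2) * ∑ i, p i * (ε i - ε̄)^2`. -/
theorem klPerturb_second_order_expansion (C : ℕ) (hC : 1 ≤ C) (s : Fin C → ℝ) :
    DifferentiableAt ℝ (klPerturb s) 0 ∧
    DifferentiableAt ℝ (fderiv ℝ (klPerturb s)) 0 ∧
    klPerturb s 0 = 0 ∧
    fderiv ℝ (klPerturb s) 0 = 0 ∧
    ∀ ε : Fin C → ℝ,
      fderiv ℝ (fderiv ℝ (klPerturb s)) 0 ε ε =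
        ∑ i, softmax s i * (ε i - ∑ j, softmax s j * ε j) ^ 2 := by
  open KLAux in
  refine ⟨(hasFDerivAt_kl s hC 0).differentiableAt, ?_, ?_, ?_, ?_⟩
  · rw [fderiv_kl s hC]
    exact ((hasFDerivAt_G s hC).sub_const (Lc s)).differentiableAt
  · rw [klPerturb_eq s hC]; simp
  · rw [fderiv_kl s hC]
    show G s 0 - Lc s = 0
    rw [G_zero_eq_Lc s hC, sub_self]
  · intro ε
    rw [fderiv2_kl s hC]
    have hT : (0:ℝ) < ∑ k, Real.exp (s k) := by
      simpa [Z_zero] using Z_pos s hC 0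
    have hTne := hT.ne'
    -- evaluate G'
    have hval : G' s ε ε =
        (∑ k, Real.exp (s k))⁻¹ * (∑ k, Real.exp (s k) * ε k * ε k)
        + (-(((∑ k, Real.exp (s k)) ^ 2)⁻¹) * (∑ k, Real.exp (s k) * ε k))
          * (∑ k, Real.exp (s k) * ε k) := by
      simp only [G', v', a', DZ, Z_zero, ContinuousLinearMap.add_apply,
        ContinuousLinearMap.coe_sum', Finset.sum_apply,
        ContinuousLinearMap.smulRight_apply, ContinuousLinearMap.smul_apply,
        ContinuousLinearMap.neg_apply, ContinuousLinearMap.proj_apply,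
        Pi.zero_apply, add_zero, smul_eq_mul]
      ring
    rw [hval]
    have hm : (∑ j, softmax s j * ε j)
        = (∑ j, Real.exp (s j) * ε j) / (∑ k, Real.exp (s k)) := by
      simp only [softmax]
      rw [Finset.sum_div]
      exact Finset.sum_congr rfl fun j _ => by ring
    rw [hm]
    have expand : ∀ i : Fin C, softmax s i *
          (ε i - (∑ j, Real.exp (s j) * ε j) / (∑ k, Real.exp (s k))) ^ 2
        = (Real.exp (s i) * ε i * ε i
            - 2 * ((∑ j, Real.exp (s j) * ε j) / (∑ k, Real.exp (s k)))
              * (Real.exp (s i) * ε i)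
            + ((∑ j, Real.exp (s j) * ε j) / (∑ k, Real.exp (s k))) ^ 2
              * Real.exp (s i)) / (∑ k, Real.exp (s k)) := by
      intro i
      rw [softmax]
      field_simp
      ring
    rw [Finset.sum_congr rfl fun i _ => expand i, ← Finset.sum_div,
      Finset.sum_add_distrib, Finset.sum_sub_distrib, ← Finset.mul_sum, ← Finset.mul_sum]
    field_simp
    ring
end
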